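/- Suppose the probability of a tie in any nearest neighbor search is zero, and let n → ∞ with K_n → ∞ and K_n/n → 0. Then for every τ ≤ T, E[Σ_{i^τ,t^τ} Σ_{j^τ,s^τ : |[i^τ,j^τ]| = 2τ+2} V_{n,i^τ,t^τ}(D_{i^τ,t^τ}) · |V_{n,j^τ,s^τ}(D_{j^τ,s^τ}) − V_{n,j^τ,s^τ}(D_{(i^τ,j^τ),(t^τ,s^τ)})|] → 0, where D_{(i^τ,j^τ),(t^τ,s^τ)} is the data set with both sets of continuation replacements applied. -/

import Mathlib

open MeasureTheory ProbabilityTheory Filter Finset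

noncomputable section

namespace KNNRPaper

attribute [local instance] Classical.propDecidable

/-- The state-action space `S = 𝒳 × 𝒰` for `𝒳 ⊆ ℝ^{d₁}` and `𝒰 ⊆ ℝ^{d₂}`. -/
abbrev SP {d₁ d₂ : ℕ} (𝓧 : Set (EuclideanSpace ℝ (Fin d₁)))
    (𝓤 : Set (EuclideanSpace ℝ (Fin d₂))) : Type := (↥𝓧) × (↥𝓤)

/-- Index of the independent sources of randomness in the model:
episode generating random functions `α_{i,t}`, episode reward noises `ε_{i,t}`,
episode initial conditions `(X_{i,0},U_{i,0})`, fresh regeneration functions `α̃_{i,t}`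
(used for the perturbed data sets `D_{i,t}`), the counterfactual noise `(α'_t, ε'_t)` and
initial state `X̂₀`, the resampled initial states `X̃_j`, and the uniformly resampled
nearest-neighbor ranks `𝒦_{n,j,t}`. -/
inductive Src : Type
  | alpha (i t : ℕ)
  | eps (i t : ℕ)
  | init (i : ℕ)
  | regen (i t : ℕ)
  | cfalpha (t : ℕ)
  | cfeps (t : ℕ)
  | cfinit
  | query (j : ℕ)
  | resample (n j t : ℕ)

variable {d₁ d₂ : ℕ}

/-- The value space of each source of randomness. -/
def SrcType (𝓧 : Set (EuclideanSpace ℝ (Fin d₁))) (𝓤 : Set (EuclideanSpace ℝ (Fin d₂))) :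
    Src → Type
  | .alpha _ _ => SP 𝓧 𝓤 → SP 𝓧 𝓤
  | .eps _ _ => ℝ
  | .init _ => SP 𝓧 𝓤
  | .regen _ _ => SP 𝓧 𝓤 → SP 𝓧 𝓤
  | .cfalpha _ => SP 𝓧 𝓤 → SP 𝓧 𝓤
  | .cfeps _ => ℝ
  | .cfinit => ↥𝓧
  | .query _ => ↥𝓧
  | .resample _ _ _ => ℕ

/-- The measurable structure on the value space of each source of randomness, where `mΓ`
is the σ-algebra on the space of transition functions. -/
def srcMS (𝓧 : Set (EuclideanSpace ℝ (Fin d₁))) (𝓤 : Set (EuclideanSpace ℝ (Fin d₂)))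
    (mΓ : MeasurableSpace (SP 𝓧 𝓤 → SP 𝓧 𝓤)) :
    ∀ s : Src, MeasurableSpace (SrcType 𝓧 𝓤 s)
  | .alpha _ _ => mΓ
  | .eps _ _ => (inferInstance : MeasurableSpace ℝ)
  | .init _ => (inferInstance : MeasurableSpace (SP 𝓧 𝓤))
  | .regen _ _ => mΓ
  | .cfalpha _ => mΓ
  | .cfeps _ => (inferInstance : MeasurableSpace ℝ)
  | .cfinit => (inferInstance : MeasurableSpace ↥𝓧)
  | .query _ => (inferInstance : MeasurableSpace ↥𝓧)
  | .resample _ _ _ => (inferInstance : MeasurableSpace ℕ)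

/-- The raw data of the off-policy evaluation setting of the paper. -/
structure Data (d₁ d₂ : ℕ) (Ω : Type) [MeasurableSpace Ω] : Type where
  /-- the underlying probability measure -/
  P : Measure Ω
  /-- the state space `𝒳 ⊆ ℝ^{d₁}` -/
  𝓧 : Set (EuclideanSpace ℝ (Fin d₁))
  /-- the action space `𝒰 ⊆ ℝ^{d₂}` -/
  𝓤 : Set (EuclideanSpace ℝ (Fin d₂))
  /-- the metric `d` carried by `S = 𝒳 × 𝒰` -/
  dS : SP 𝓧 𝓤 → SP 𝓧 𝓤 → ℝ
  /-- the (finite) time horizon `T` -/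
  T : ℕ
  /-- the bound `M` on rewards and reward noise -/
  M : ℝ
  /-- the mean reward function `r : S → [-M,M]` -/
  r : SP 𝓧 𝓤 → ℝ
  /-- the uniformly equicontinuous set of transition functions `Γ ⊆ C(S,S)` -/
  Γ : Set (SP 𝓧 𝓤 → SP 𝓧 𝓤)
  /-- a σ-algebra on the transition functions -/
  mΓ : MeasurableSpace (SP 𝓧 𝓤 → SP 𝓧 𝓤)
  /-- `(X_{i,t}, U_{i,t})`: the state-action pair of episode `i` at time `t` -/
  Z : ℕ → ℕ → Ω → SP 𝓧 𝓤
  /-- `ε_{i,t}`: the reward noise of episode `i` at time `t` -/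
  ε : ℕ → ℕ → Ω → ℝ
  /-- `α_{i,t}`: the random transition function generating episode `i` at time `t` -/
  α : ℕ → ℕ → Ω → (SP 𝓧 𝓤 → SP 𝓧 𝓤)
  /-- `α̃_{i,t}`: fresh random transition functions used for regenerated continuations -/
  αregen : ℕ → ℕ → Ω → (SP 𝓧 𝓤 → SP 𝓧 𝓤)
  /-- `α'_t`: the random transition functions of the counterfactual system -/
  αcf : ℕ → Ω → (SP 𝓧 𝓤 → SP 𝓧 𝓤)
  /-- `ε'_t`: the reward noise of the counterfactual system -/
  εcf : ℕ → Ω → ℝ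
  /-- `X̂₀`: the initial state of the counterfactual system -/
  ξ : Ω → ↥𝓧
  /-- `X̃_j`: the resampled initial states, i.i.d. `∼ ν₀` -/
  Xq : ℕ → Ω → ↥𝓧
  /-- `K_n`: the number of nearest neighbors used with a data set of `n` episodes -/
  K : ℕ → ℕ
  /-- `𝒦_{n,j,t}`: the uniformly resampled ranks on `{1,…,K_n}` -/
  𝒦 : ℕ → ℕ → ℕ → Ω → ℕ
  /-- `ν₀`: the (known) initial state distribution -/
  ν₀ : Measure ↥𝓧

variable {Ω : Type} [MeasurableSpace Ω]

/-- All sources of randomness of the model, as one family of random variables. -/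
def Data.srcFun (E : Data d₁ d₂ Ω) : ∀ s : Src, Ω → SrcType E.𝓧 E.𝓤 s
  | .alpha i t => E.α i t
  | .eps i t => E.ε i t
  | .init i => E.Z i 0
  | .regen i t => E.αregen i t
  | .cfalpha t => E.αcf t
  | .cfeps t => E.εcf t
  | .cfinit => E.ξ
  | .query j => E.Xq j
  | .resample n j t => E.𝒦 n j t

/-- The setting of Section 2 of the paper: the data consists of `n` i.i.d. episodes
generated by i.i.d. random functions taking values in a uniformly equicontinuous set
`Γ ⊆ C(S,S)`, with rewards `R_t = r(X_t,U_t) + ε_t`; the counterfactual system uses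
noise with the same law; `X̃_j ∼ ν₀` i.i.d.; the ranks `𝒦_{n,j,t}` are i.i.d. uniform
on `{1,…,K_n}`; and all these sources of randomness are jointly independent. -/
structure Setting (d₁ d₂ : ℕ) (Ω : Type) [MeasurableSpace Ω] extends Data d₁ d₂ Ω : Type where
  probP : IsProbabilityMeasure P
  dS_eq_zero : ∀ p q, dS p q = 0 ↔ p = q
  dS_comm : ∀ p q, dS p q = dS q p
  dS_triangle : ∀ p q s, dS p s ≤ dS p q + dS q s
  Mpos : 0 < M
  /-- `r` takes values in `[-M,M]` -/
  hr_bdd : ∀ p, r p ∈ Set.Icc (-M) M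
  /-- `r` is continuous (w.r.t. the metric `d` on `S`) -/
  hr_cont : ∀ p, ∀ e > 0, ∃ δ > 0, ∀ q, dS p q < δ → |r p - r q| < e
  /-- `Γ` is a uniformly equicontinuous set of functions -/
  hΓ_equicont : ∀ e > 0, ∃ δ > 0, ∀ γ ∈ Γ, ∀ p q, dS p q < δ → dS (γ p) (γ q) < e
  /-- the evaluation map `(γ,x) ↦ γ(x)` is jointly measurable -/
  hΓ_eval : @Measurable ((SP 𝓧 𝓤 → SP 𝓧 𝓤) × SP 𝓧 𝓤) (SP 𝓧 𝓤)
      (@Prod.instMeasurableSpace _ _ mΓ _) _ (fun p => p.1 p.2)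
  hα_mem : ∀ i t ω, α i t ω ∈ Γ
  hαregen_mem : ∀ i t ω, αregen i t ω ∈ Γ
  hαcf_mem : ∀ t ω, αcf t ω ∈ Γ
  /-- the episodes are generated by the random dynamical system:
  `(X_{i,t+1},U_{i,t+1}) = α_{i,t}(X_{i,t},U_{i,t})` -/
  hZ_gen : ∀ i t ω, t < T → Z i (t + 1) ω = α i t ω (Z i t ω)
  hZ_meas : ∀ i t, Measurable (Z i t)
  hε_meas : ∀ i t, Measurable (ε i t)
  hα_meas : ∀ i t, @Measurable Ω _ _ mΓ (α i t)
  hαregen_meas : ∀ i t, @Measurable Ω _ _ mΓ (αregen i t)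
  hαcf_meas : ∀ t, @Measurable Ω _ _ mΓ (αcf t)
  hεcf_meas : ∀ t, Measurable (εcf t)
  hξ_meas : Measurable ξ
  hXq_meas : ∀ j, Measurable (Xq j)
  h𝒦_meas : ∀ n j t, Measurable (𝒦 n j t)
  /-- all the sources of randomness are jointly independent -/
  hIndep : iIndepFun (m := srcMS 𝓧 𝓤 mΓ) toData.srcFun P
  /-- the random transition functions are identically distributed -/
  hα_ident : ∀ i t, @Measure.map Ω _ _ mΓ (α i t) P = @Measure.map Ω _ _ mΓ (α 0 0) P
  hαregen_ident : ∀ i t, @Measure.map Ω _ _ mΓ (αregen i t) P = @Measure.map Ω _ _ mΓ (α 0 0) P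
  hαcf_ident : ∀ t, @Measure.map Ω _ _ mΓ (αcf t) P = @Measure.map Ω _ _ mΓ (α 0 0) P
  /-- the reward noises are identically distributed -/
  hε_ident : ∀ i t, P.map (ε i t) = P.map (ε 0 0)
  hεcf_ident : ∀ t, P.map (εcf t) = P.map (ε 0 0)
  /-- the initial conditions of the episodes are identically distributed -/
  hinit_ident : ∀ i, P.map (Z i 0) = P.map (Z 0 0)
  /-- `ν₀` is the law of `X_{i,0}` -/
  hν₀ : P.map (fun ω => (Z 0 0 ω).1) = ν₀
  hξ_law : P.map ξ = ν₀
  hXq_law : ∀ j, P.map (Xq j) = ν₀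
  /-- the reward noise is supported on `[-M,M]` and centered -/
  hε_bdd : ∀ i t ω, ε i t ω ∈ Set.Icc (-M) M
  hε_mean : ∀ i t, ∫ ω, ε i t ω ∂P = 0
  hεcf_bdd : ∀ t ω, εcf t ω ∈ Set.Icc (-M) M
  hεcf_mean : ∀ t, ∫ ω, εcf t ω ∂P = 0
  hK_pos : ∀ n, 1 ≤ K n
  /-- the resampled ranks are uniformly distributed on `{1,…,K_n}` -/
  h𝒦_mem : ∀ n j t ω, 𝒦 n j t ω ∈ Finset.Icc 1 (K n)
  h𝒦_unif : ∀ n j t k, k ∈ Finset.Icc 1 (K n) → P (𝒦 n j t ⁻¹' {k}) = ((K n : ENNReal))⁻¹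

namespace Setting

variable (E : Setting d₁ d₂ Ω)

/-- The reward `R_{i,t} = r(X_{i,t},U_{i,t}) + ε_{i,t}`. -/
def Rw (i t : ℕ) (ω : Ω) : ℝ := E.r (E.Z i t ω) + E.ε i t ω

/-- The index set of the data set `D` with `n` episodes: pairs `(i,t)` with
`i < n`, `t < T` (`0`-based). -/
def idxSet (n : ℕ) : Finset (ℕ × ℕ) := Finset.range n ×ˢ Finset.range E.T

/-- The (original) data set `D`, as a map `(i,t,ω) ↦ (X_{i,t},U_{i,t})(ω)`. -/
def origData : ℕ → ℕ → Ω → SP E.𝓧 E.𝓤 := fun i t => E.Z i t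

/-- `s`-fold composition of the fresh regeneration functions of episode `i` starting at
time `t`: `α̃_{i,t+s-1} ∘ ⋯ ∘ α̃_{i,t}`. -/
def regenIter (i t : ℕ) : ℕ → Ω → SP E.𝓧 E.𝓤 → SP E.𝓧 E.𝓤
  | 0 => fun _ p => p
  | s + 1 => fun ω p => E.αregen i (t + s) ω (regenIter i t s ω p)

/-- The perturbed data set obtained from `D` by recursively (head of the list applied
last, i.e. outermost) replacing, for each `(i,t)` in the list, the continuation of episode
`i` after time `t` by an independently regenerated continuation started from the current
sample at `(i,t)`. -/
def perturb : List (ℕ × ℕ) → ℕ → ℕ → Ω → SP E.𝓧 E.𝓤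
  | [] => fun i t ω => E.Z i t ω
  | (a, b) :: L => fun i t ω =>
      if i = a ∧ b < t then E.regenIter a b (t - b) ω (perturb L a b ω)
      else perturb L i t ω

/-- The list of replacement points corresponding to a multi-index `(i^τ,t^τ)`. -/
def replList {τ : ℕ} (idx : Fin (τ + 1) → ℕ × ℕ) : List (ℕ × ℕ) :=
  (List.finRange (τ + 1)).map idx

/-- The number of data points of the data set (of `n` episodes) strictly closer to the
query `q` than the data point with index `p`. -/
def closerCard (n : ℕ) (data : ℕ → ℕ → SP E.𝓧 E.𝓤) (q : SP E.𝓧 E.𝓤) (p : ℕ × ℕ) : ℕ :=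
  ((E.idxSet n).filter fun p' => E.dS q (data p'.1 p'.2) < E.dS q (data p.1 p.2)).card

/-- `(X_{i,t},U_{i,t})` is a `K`-nearest neighbor of the query `q` in the data set:
its rank in the ordering by increasing distance to `q` is at most `K`. -/
def isKNN (n K : ℕ) (data : ℕ → ℕ → SP E.𝓧 E.𝓤) (q : SP E.𝓧 E.𝓤) (p : ℕ × ℕ) : Prop :=
  p ∈ E.idxSet n ∧ E.closerCard n data q p < K

/-- The `k`-th nearest neighbor (exact rank `k`) of the query `q` in the data set
(well defined under the no-ties assumption). -/
def kthNN (n : ℕ) (data : ℕ → ℕ → SP E.𝓧 E.𝓤) (q : SP E.𝓧 E.𝓤) (k : ℕ) : ℕ × ℕ :=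
  if h : ∃ p ∈ E.idxSet n, E.closerCard n data q p + 1 = k then h.choose else (0, 0)

/-- The query of step `st` of a nearest neighbor path whose previous sample has index `p`:
`(X_{i,t+1}, u_{st}(X_{i,t+1}))`. -/
def nextQuery (u : ℕ → ↥E.𝓧 → ↥E.𝓤) (data : ℕ → ℕ → SP E.𝓧 E.𝓤) (st : ℕ) (p : ℕ × ℕ) :
    SP E.𝓧 E.𝓤 :=
  ((data p.1 (p.2 + 1)).1, u st (data p.1 (p.2 + 1)).1)

/-- `(i^τ,t^τ)` is a `K`-NN path of length `τ` starting at `x₀` under the policy `u`: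
each step-`q` sample is a `K`-nearest neighbor of the corresponding query. -/
def isNNPath (n K : ℕ) (u : ℕ → ↥E.𝓧 → ↥E.𝓤) (data : ℕ → ℕ → SP E.𝓧 E.𝓤) (x₀ : ↥E.𝓧)
    (τ : ℕ) (idx : Fin (τ + 1) → ℕ × ℕ) : Prop :=
  E.isKNN n K data (x₀, u 0 x₀) (idx 0) ∧
    ∀ q : Fin τ, E.isKNN n K data (E.nextQuery u data ((q : ℕ) + 1) (idx q.castSucc)) (idx q.succ)

/-- The `K_n`-NN path weight
`V_{n,i^τ,t^τ}(D̃) = K_n^{-(τ+1)} 1{(i^τ,t^τ) is a K_n-NN path starting at X̃₁ under u in D̃}`. -/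
def V (n K : ℕ) (u : ℕ → ↥E.𝓧 → ↥E.𝓤) (data : ℕ → ℕ → Ω → SP E.𝓧 E.𝓤) (τ : ℕ)
    (idx : Fin (τ + 1) → ℕ × ℕ) (ω : Ω) : ℝ :=
  if E.isNNPath n K u (fun i t => data i t ω) (E.Xq 0 ω) τ idx then ((K : ℝ))⁻¹ ^ (τ + 1) else 0

/-- The path of data indices selected by the rank sequence `ks`: the step-`0` sample is the
`ks 0`-th nearest neighbor of `(x₀,u₀(x₀))` and the step-`(q+1)` sample is the `ks (q+1)`-th
nearest neighbor of the query built from the step-`q` sample. -/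
def rankPath (n : ℕ) (u : ℕ → ↥E.𝓧 → ↥E.𝓤) (data : ℕ → ℕ → SP E.𝓧 E.𝓤) (x₀ : ↥E.𝓧)
    (ks : ℕ → ℕ) : ℕ → ℕ × ℕ
  | 0 => E.kthNN n data (x₀, u 0 x₀) (ks 0)
  | τ + 1 => E.kthNN n data (E.nextQuery u data (τ + 1) (rankPath n u data x₀ ks τ)) (ks (τ + 1))

/-- `R_τ^{k^τ}(x₀;u)(ω)`: the reward of the step-`τ` sample of the nearest neighbor path
selected by the rank sequence `ks`. -/
def pathReward (n : ℕ) (u : ℕ → ↥E.𝓧 → ↥E.𝓤) (x₀ : ↥E.𝓧) (ks : ℕ → ℕ) (τ : ℕ) (ω : Ω) : ℝ :=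
  E.Rw (E.rankPath n u (fun i t => E.Z i t ω) x₀ ks τ).1
    (E.rankPath n u (fun i t => E.Z i t ω) x₀ ks τ).2 ω

/-- The KNNR estimator `m^{KNNR}_{l,n}(u)`. -/
def knnrEst (n l : ℕ) (u : ℕ → ↥E.𝓧 → ↥E.𝓤) (ω : Ω) : ℝ :=
  ∑ τ ∈ Finset.range (E.T + 1), (l : ℝ)⁻¹ *
    ∑ j ∈ Finset.range l, E.pathReward n u (E.Xq j ω) (fun t => E.𝒦 n j t ω) τ ω

/-- The `K_n`-NN path regression estimator `m^{NN}_{l,n}(u)`. -/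
def nnEst (n l : ℕ) (u : ℕ → ↥E.𝓧 → ↥E.𝓤) (ω : Ω) : ℝ :=
  ∑ τ ∈ Finset.range (E.T + 1), (l : ℝ)⁻¹ *
    ∑ j ∈ Finset.range l,
      ∑ ks ∈ Fintype.piFinset (fun _ : Fin (τ + 1) => Finset.Icc 1 (E.K n)),
        ((E.K n : ℝ))⁻¹ ^ (τ + 1) *
          E.pathReward n u (E.Xq j ω)
            (fun t => if h : t < τ + 1 then ks ⟨t, h⟩ else 1) τ ω

/-- The counterfactual state process `X̂_t`:
`X̂₀ ∼ ν₀` and `X̂_{t+1} = Π(α'_t(X̂_t, u_t(X̂_t)))`. -/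
def cfX (u : ℕ → ↥E.𝓧 → ↥E.𝓤) (ω : Ω) : ℕ → ↥E.𝓧
  | 0 => E.ξ ω
  | t + 1 => (E.αcf t ω (cfX u ω t, u t (cfX u ω t))).1

/-- The value `m(u) = E[Σ_{t=0}^T R_t|_u]` of the policy `u`. -/
def value (u : ℕ → ↥E.𝓧 → ↥E.𝓤) : ℝ :=
  ∫ ω, (∑ t ∈ Finset.range (E.T + 1),
    (E.r (E.cfX u ω t, u t (E.cfX u ω t)) + E.εcf t ω)) ∂E.P

/-- `x` lies in the support of a measure on `𝒳`. -/
def memSuppX (μ : Measure ↥E.𝓧) (x : ↥E.𝓧) : Prop := ∀ e > 0, 0 < μ (Metric.ball x e)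

/-- `p` lies in the support of a measure on `S` (w.r.t. the metric `d`). -/
def memSuppS (μ : Measure (SP E.𝓧 E.𝓤)) (p : SP E.𝓧 E.𝓤) : Prop :=
  ∀ e > 0, 0 < μ {q | E.dS p q < e}

/-- `π_t|_x`: the law of `X_t`. -/
def lawX (t : ℕ) : Measure ↥E.𝓧 := E.P.map (fun ω => (E.Z 0 t ω).1)

/-- `π_t`: the law of `(X_t,U_t)`. -/
def lawS (t : ℕ) : Measure (SP E.𝓧 E.𝓤) := E.P.map (E.Z 0 t)

/-- Assumption 1.2 (coverage): for all `t` and all `x ∈ supp(π_t|_x)` there is `t̃ < T-1`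
with `(x,u_t(x)) ∈ supp(π_{t̃})`. -/
def Coverage (u : ℕ → ↥E.𝓧 → ↥E.𝓤) : Prop :=
  ∀ t ≤ E.T, ∀ x : ↥E.𝓧, E.memSuppX (E.lawX t) x →
    ∃ t', t' + 1 < E.T ∧ E.memSuppS (E.lawS t') (x, u t x)

/-- All distances from the query `q` to the data points of the data set of `n` episodes
are pairwise distinct (no ties occur in the nearest neighbor search for `q`). -/
def noTiesFor (n : ℕ) (data : ℕ → ℕ → SP E.𝓧 E.𝓤) (q : SP E.𝓧 E.𝓤) : Prop :=
  ∀ p₁ ∈ E.idxSet n, ∀ p₂ ∈ E.idxSet n,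
    E.dS q (data p₁.1 p₁.2) = E.dS q (data p₂.1 p₂.2) → p₁ = p₂

/-- Assumption 1.1: the probability of a tie occurring in any nearest neighbor search
(for any data set size, any (possibly perturbed) data set, and any query arising in the
algorithm) is zero. -/
def NoTies (u : ℕ → ↥E.𝓧 → ↥E.𝓤) : Prop :=
  ∀ n : ℕ, ∀ x₀ : ↥E.𝓧, ∀ᵐ ω ∂E.P, ∀ L L' : List (ℕ × ℕ),
    E.noTiesFor n (fun i t => E.perturb L i t ω) (x₀, u 0 x₀) ∧
    (∀ j, E.noTiesFor n (fun i t => E.perturb L i t ω) (E.Xq j ω, u 0 (E.Xq j ω))) ∧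
    (∀ p ∈ E.idxSet n, ∀ st ≤ E.T,
      E.noTiesFor n (fun i t => E.perturb L i t ω)
        (E.nextQuery u (fun i t => E.perturb L' i t ω) st p))

/-- `|i^τ|`: number of distinct episode indices of a multi-index. -/
def distinctEp {τ : ℕ} (idx : Fin (τ + 1) → ℕ × ℕ) : ℕ :=
  (Finset.univ.image fun q => (idx q).1).card

/-- `|[i^τ,j^τ]|`: number of distinct episode indices of two multi-indices together. -/
def distinctEp₂ {τ : ℕ} (idx jdx : Fin (τ + 1) → ℕ × ℕ) : ℕ :=
  ((Finset.univ.image fun q => (idx q).1) ∪ (Finset.univ.image fun q => (jdx q).1)).card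

end Setting

end KNNRPaper

namespace KNNRPaper

attribute [local instance] Classical.propDecidable
namespace Setting

variable {d₁ d₂ : ℕ} {Ω : Type} [MeasurableSpace Ω] (E : Setting d₁ d₂ Ω)

lemma perturb_eq_of_not_mem (ω : Ω) :
    ∀ (L : List (ℕ × ℕ)) (i t : ℕ), i ∉ L.map Prod.fst →
      E.perturb L i t ω = E.Z i t ω
  | [], _, _, _ => rfl
  | (a, b) :: L, i, t, h => by
    rw [List.map_cons, List.mem_cons, not_or] at h
    show (if i = a ∧ b < t then _ else E.perturb L i t ω) = _
    rw [if_neg (fun hc => h.1 hc.1)]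
    exact perturb_eq_of_not_mem ω L i t h.2

lemma perturb_eq_of_mem (ω : Ω) :
    ∀ (L : List (ℕ × ℕ)), (L.map Prod.fst).Nodup →
      ∀ p ∈ L, ∀ t, E.perturb L p.1 t ω =
        if p.2 < t then E.regenIter p.1 p.2 (t - p.2) ω (E.Z p.1 p.2 ω) else E.Z p.1 t ω
  | [], _, p, hp, _ => absurd hp List.not_mem_nil
  | (a, b) :: L, hN, p, hp, t => by
    rw [List.map_cons, List.nodup_cons] at hN
    rcases List.mem_cons.mp hp with rfl | hpL
    · show (if a = a ∧ b < t then
          E.regenIter a b (t - b) ω (E.perturb L a b ω) else E.perturb L a t ω) = _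
      by_cases hbt : b < t
      · rw [if_pos ⟨rfl, hbt⟩, if_pos hbt, E.perturb_eq_of_not_mem ω L a b hN.1]
      · rw [if_neg (fun hc => hbt hc.2), if_neg hbt,
          E.perturb_eq_of_not_mem ω L a t hN.1]
    · have hpa : p.1 ≠ a := by
        intro hc
        exact hN.1 (hc ▸ List.mem_map.mpr ⟨p, hpL, rfl⟩)
      show (if p.1 = a ∧ b < t then _ else E.perturb L p.1 t ω) = _
      rw [if_neg (fun hc => hpa hc.1)]
      exact perturb_eq_of_mem ω L hN.2 p hpL t

lemma perturb_self (ω : Ω) (L : List (ℕ × ℕ)) (hN : (L.map Prod.fst).Nodup)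
    (p : ℕ × ℕ) (hp : p ∈ L) : E.perturb L p.1 p.2 ω = E.Z p.1 p.2 ω := by
  rw [E.perturb_eq_of_mem ω L hN p hp p.2, if_neg (lt_irrefl p.2)]

lemma perturb_succ (ω : Ω) (L : List (ℕ × ℕ)) (hN : (L.map Prod.fst).Nodup)
    (p : ℕ × ℕ) (hp : p ∈ L) :
    E.perturb L p.1 (p.2 + 1) ω = E.αregen p.1 p.2 ω (E.Z p.1 p.2 ω) := by
  rw [E.perturb_eq_of_mem ω L hN p hp (p.2 + 1), if_pos (Nat.lt_succ_self p.2)]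
  have h1 : p.2 + 1 - p.2 = 1 := by omega
  rw [h1]
  show E.αregen p.1 (p.2 + 0) ω (E.regenIter p.1 p.2 0 ω (E.Z p.1 p.2 ω)) = _
  rfl

end Setting
namespace Setting

variable {d₁ d₂ : ℕ} {Ω : Type} [MeasurableSpace Ω] (E : Setting d₁ d₂ Ω)

lemma closerCard_transfer (n : ℕ) (data data' : ℕ → ℕ → SP E.𝓧 E.𝓤)
    (q : SP E.𝓧 E.𝓤) (p : ℕ × ℕ) (hp : data p.1 p.2 = data' p.1 p.2) (m : ℕ)
    (hm : ((E.idxSet n).filter fun r => ¬ (data r.1 r.2 = data' r.1 r.2)).card ≤ m) :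
    E.closerCard n data' q p ≤ E.closerCard n data q p + m := by
  refine le_trans ?_ (Nat.add_le_add_left hm _)
  refine le_trans (Finset.card_le_card ?_) (Finset.card_union_le _ _)
  intro r hr
  rw [Finset.mem_filter] at hr
  rw [Finset.mem_union, Finset.mem_filter, Finset.mem_filter]
  by_cases h : data r.1 r.2 = data' r.1 r.2
  · exact Or.inl ⟨hr.1, by rw [h, hp]; exact hr.2⟩
  · exact Or.inr ⟨hr.1, h⟩

lemma perturb_diff_card (ω : Ω) (n : ℕ) (L : List (ℕ × ℕ)) :
    ((E.idxSet n).filter fun r => ¬ (E.perturb L r.1 r.2 ω = E.Z r.1 r.2 ω)).card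
      ≤ L.length * E.T := by
  have hsub : ((E.idxSet n).filter fun r => ¬ (E.perturb L r.1 r.2 ω = E.Z r.1 r.2 ω))
      ⊆ (L.map Prod.fst).toFinset ×ˢ Finset.range E.T := by
    intro r hr
    rw [Finset.mem_filter] at hr
    rw [Finset.mem_product, List.mem_toFinset]
    constructor
    · by_contra h
      exact hr.2 (E.perturb_eq_of_not_mem ω L r.1 r.2 h)
    · exact (Finset.mem_product.mp hr.1).2
  refine le_trans (Finset.card_le_card hsub) ?_
  rw [Finset.card_product, Finset.card_range]
  exact Nat.mul_le_mul_right _ (le_trans (List.toFinset_card_le _) (by simp))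

lemma perturb_diff_card' (ω : Ω) (n : ℕ) (L : List (ℕ × ℕ)) :
    ((E.idxSet n).filter fun r => ¬ (E.Z r.1 r.2 ω = E.perturb L r.1 r.2 ω)).card
      ≤ L.length * E.T := by
  refine le_trans (le_of_eq (congrArg Finset.card (Finset.filter_congr fun r _ => ?_)))
    (E.perturb_diff_card ω n L)
  simp [eq_comm]

lemma count_rank_mem (n : ℕ) (data : ℕ → ℕ → SP E.𝓧 E.𝓤) (q : SP E.𝓧 E.𝓤)
    (hnt : E.noTiesFor n data q) (s : Finset ℕ) :
    ((E.idxSet n).filter fun p => E.closerCard n data q p ∈ s).card ≤ s.card := by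
  have key : ∀ p₁ ∈ E.idxSet n, ∀ p₂ ∈ E.idxSet n,
      E.dS q (data p₁.1 p₁.2) < E.dS q (data p₂.1 p₂.2) →
      E.closerCard n data q p₁ < E.closerCard n data q p₂ := by
    intro p₁ h₁ p₂ h₂ hd
    apply Finset.card_lt_card
    constructor
    · intro r hr
      rw [Finset.mem_filter] at hr ⊢
      exact ⟨hr.1, lt_trans hr.2 hd⟩
    · intro hsub
      have : p₁ ∈ (E.idxSet n).filter fun p' =>
          E.dS q (data p'.1 p'.2) < E.dS q (data p₂.1 p₂.2) :=
        Finset.mem_filter.mpr ⟨h₁, hd⟩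
      have := hsub this
      rw [Finset.mem_filter] at this
      exact lt_irrefl _ this.2
  apply Finset.card_le_card_of_injOn (fun p => E.closerCard n data q p)
  · intro p hp
    exact (Finset.mem_filter.mp hp).2
  · intro p₁ h₁ p₂ h₂ he
    have h₁' := (Finset.mem_filter.mp h₁).1
    have h₂' := (Finset.mem_filter.mp h₂).1
    by_contra hne
    rcases lt_trichotomy (E.dS q (data p₁.1 p₁.2)) (E.dS q (data p₂.1 p₂.2)) with h | h | h
    · exact absurd he (Nat.ne_of_lt (key p₁ h₁' p₂ h₂' h))
    · exact hne (hnt p₁ h₁' p₂ h₂' h)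
    · exact absurd he.symm (Nat.ne_of_lt (key p₂ h₂' p₁ h₁' h))

end Setting
lemma chain_count (S : Finset (ℕ × ℕ)) (m : ℕ → ℕ) :
    ∀ (τ : ℕ) (P : ℕ → ℕ × ℕ → ℕ × ℕ → Prop),
      (S.filter (P 0 (0, 0))).card ≤ m 0 →
      (∀ st, 1 ≤ st → st ≤ τ → ∀ prev ∈ S, (S.filter (P st prev)).card ≤ m st) →
      (((Fintype.piFinset fun _ : Fin (τ + 1) => S).filter fun idx =>
          P 0 (0, 0) (idx 0) ∧ ∀ q : Fin τ, P ((q : ℕ) + 1) (idx q.castSucc) (idx q.succ)).card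
        ≤ ∏ st ∈ Finset.range (τ + 1), m st)
  | 0, P, h0, _ => by
    rw [Finset.prod_range_one]
    refine le_trans (Finset.card_le_card_of_injOn (fun idx => idx 0) ?_ ?_) h0
    · intro idx hidx
      rw [Finset.mem_coe, Finset.mem_filter] at hidx
      exact Finset.mem_filter.mpr ⟨Fintype.mem_piFinset.mp hidx.1 0, hidx.2.1⟩
    · intro f hf g hg he
      funext q
      have : q = 0 := Fin.fin_one_eq_zero q
      rw [this]; exact he
  | τ + 1, P, h0, hstep => by
    classical
    set big := ((Fintype.piFinset fun _ : Fin (τ + 2) => S).filter fun idx =>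
        P 0 (0, 0) (idx 0) ∧ ∀ q : Fin (τ + 1), P ((q : ℕ) + 1) (idx q.castSucc) (idx q.succ))
      with hbig
    set small := ((Fintype.piFinset fun _ : Fin (τ + 1) => S).filter fun idx =>
        P 0 (0, 0) (idx 0) ∧ ∀ q : Fin τ, P ((q : ℕ) + 1) (idx q.castSucc) (idx q.succ))
      with hsmall
    have hproj : ∀ idx ∈ big, Fin.init idx ∈ small := by
      intro idx hidx
      rw [hbig, Finset.mem_filter] at hidx
      obtain ⟨hpi, hc0, hcs⟩ := hidx
      rw [hsmall, Finset.mem_filter]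
      refine ⟨Fintype.mem_piFinset.mpr fun q => Fintype.mem_piFinset.mp hpi _, ?_, ?_⟩
      · show P 0 (0,0) (idx (Fin.castSucc 0))
        rw [Fin.castSucc_zero]; exact hc0
      · intro q
        have := hcs q.castSucc
        rw [Fin.succ_castSucc] at this
        exact this
    rw [Finset.card_eq_sum_card_fiberwise hproj]
    have hfib : ∀ y ∈ small, (big.filter fun idx => Fin.init idx = y).card ≤ m (τ + 1) := by
      intro y hy
      have hyS : y (Fin.last τ) ∈ S := by
        rw [hsmall, Finset.mem_filter] at hy
        exact Fintype.mem_piFinset.mp hy.1 _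
      refine le_trans (Finset.card_le_card_of_injOn (fun idx => idx (Fin.last (τ + 1)))
        ?_ ?_) (hstep (τ + 1) (by omega) (by omega) (y (Fin.last τ)) hyS)
      · intro idx hidx
        rw [Finset.mem_coe, Finset.mem_filter] at hidx
        obtain ⟨hb, hinit⟩ := hidx
        rw [hbig, Finset.mem_filter] at hb
        refine Finset.mem_filter.mpr ⟨Fintype.mem_piFinset.mp hb.1 _, ?_⟩
        have := hb.2.2 (Fin.last τ)
        rw [Fin.succ_last] at this
        have h1 : idx (Fin.castSucc (Fin.last τ)) = y (Fin.last τ) := by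
          rw [← hinit]; rfl
        rw [h1] at this
        simpa using this
      · intro f hf g hg he
        have hfi := (Finset.mem_filter.mp hf).2
        have hgi := (Finset.mem_filter.mp hg).2
        funext q
        refine Fin.lastCases ?_ ?_ q
        · exact he
        · intro i
          have : Fin.init f i = Fin.init g i := by rw [hfi, hgi]
          exact this
    calc ∑ y ∈ small, (big.filter fun idx => Fin.init idx = y).card
        ≤ ∑ _y ∈ small, m (τ + 1) := Finset.sum_le_sum hfib
      _ = small.card * m (τ + 1) := by rw [Finset.sum_const, smul_eq_mul]
      _ ≤ (∏ st ∈ Finset.range (τ + 1), m st) * m (τ + 1) := by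
          refine Nat.mul_le_mul_right _ (chain_count S m τ P h0 ?_)
          intro st h1 h2 prev hprev
          exact hstep st h1 (by omega) prev hprev
      _ = ∏ st ∈ Finset.range (τ + 2), m st := by
          simp [Finset.prod_range_succ, mul_assoc]
lemma filter_card_le_of_imp {α : Type*} (s : Finset α) {p q : α → Prop}
    {instp : DecidablePred p} {instq : DecidablePred q} (h : ∀ a ∈ s, p a → q a) (m : ℕ)
    (hq : (@Finset.filter α q instq s).card ≤ m) : (@Finset.filter α p instp s).card ≤ m := by
  refine le_trans (Finset.card_le_card ?_) hq
  intro a ha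
  rw [Finset.mem_filter] at ha ⊢
  exact ⟨ha.1, h a ha.1 ha.2⟩
namespace Setting

variable {d₁ d₂ : ℕ} {Ω : Type} [MeasurableSpace Ω]

/-- The canonical query of step `st` given previous sample `p`. -/
def qy (E : Setting d₁ d₂ Ω) (u : ℕ → ↥E.𝓧 → ↥E.𝓤) (ω : Ω) (st : ℕ) (p : ℕ × ℕ) :
    SP E.𝓧 E.𝓤 :=
  if st = 0 then (E.Xq 0 ω, u 0 (E.Xq 0 ω))
  else ((E.αregen p.1 p.2 ω (E.Z p.1 p.2 ω)).1, u st (E.αregen p.1 p.2 ω (E.Z p.1 p.2 ω)).1)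

/-- Chain condition for a multi-index. -/
def chainCond (P : ℕ → ℕ × ℕ → ℕ × ℕ → Prop) (τ : ℕ) (idx : Fin (τ + 1) → ℕ × ℕ) : Prop :=
  P 0 (0, 0) (idx 0) ∧ ∀ q : Fin τ, P ((q : ℕ) + 1) (idx q.castSucc) (idx q.succ)

variable (E : Setting d₁ d₂ Ω)

lemma nextQuery_perturb_eq_qy (u : ℕ → ↥E.𝓧 → ↥E.𝓤) (ω : Ω) (L : List (ℕ × ℕ))
    (hN : (L.map Prod.fst).Nodup) (p : ℕ × ℕ) (hp : p ∈ L) (st : ℕ) :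
    E.nextQuery u (fun i t => E.perturb L i t ω) (st + 1) p = qy E u ω (st + 1) p := by
  show ((E.perturb L p.1 (p.2 + 1) ω).1, u (st + 1) (E.perturb L p.1 (p.2 + 1) ω).1) = _
  rw [E.perturb_succ ω L hN p hp, qy, if_neg (Nat.succ_ne_zero st)]

lemma noTies_qy (u : ℕ → ↥E.𝓧 → ↥E.𝓤) (τ n : ℕ) (hτ : τ ≤ E.T) (ω : Ω)
    (hnt0 : E.noTiesFor n (fun i t => E.Z i t ω) (E.Xq 0 ω, u 0 (E.Xq 0 ω)))
    (hntQ : ∀ p ∈ E.idxSet n, ∀ st ≤ E.T,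
      E.noTiesFor n (fun i t => E.Z i t ω)
        (E.nextQuery u (fun i t => E.perturb [p] i t ω) st p)) :
    ∀ st, st ≤ τ → ∀ prev, (st = 0 ∨ prev ∈ E.idxSet n) →
      E.noTiesFor n (fun i t => E.Z i t ω) (qy E u ω st prev) := by
  intro st hst prev hprev
  cases st with
  | zero =>
    rw [qy, if_pos rfl]
    exact hnt0
  | succ st =>
    have hprev' : prev ∈ E.idxSet n := by
      rcases hprev with h | h
      · exact absurd h (Nat.succ_ne_zero st)
      · exact h
    have hrw := E.nextQuery_perturb_eq_qy u ω ([prev]) (by simp) prev (by simp) st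
    rw [← hrw]
    exact hntQ prev hprev' (st + 1) (le_trans hst hτ)

lemma isNNPath_iff_chain (u : ℕ → ↥E.𝓧 → ↥E.𝓤) (ω : Ω) (τ n K : ℕ)
    (L : List (ℕ × ℕ)) (hN : (L.map Prod.fst).Nodup) (jdx : Fin (τ + 1) → ℕ × ℕ)
    (hS : ∀ q, jdx q ∈ E.idxSet n) (hL : ∀ q, jdx q ∈ L) :
    E.isNNPath n K u (fun i t => E.perturb L i t ω) (E.Xq 0 ω) τ jdx ↔
      (E.closerCard n (fun i t => E.perturb L i t ω) (qy E u ω 0 (0, 0)) (jdx 0) < K ∧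
        ∀ q : Fin τ, E.closerCard n (fun i t => E.perturb L i t ω)
          (qy E u ω ((q : ℕ) + 1) (jdx q.castSucc)) (jdx q.succ) < K) := by
  have hq0 : qy E u ω 0 (0, 0) = (E.Xq 0 ω, u 0 (E.Xq 0 ω)) := by rw [qy, if_pos rfl]
  constructor
  · rintro ⟨⟨_, h0⟩, hq⟩
    refine ⟨by rwa [hq0], fun q => ?_⟩
    have h2 := (hq q).2
    rwa [E.nextQuery_perturb_eq_qy u ω L hN (jdx q.castSucc) (hL q.castSucc) (q : ℕ)] at h2
  · rintro ⟨h0, hq⟩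
    refine ⟨⟨hS 0, by rwa [← hq0]⟩, fun q => ⟨hS q.succ, ?_⟩⟩
    rw [E.nextQuery_perturb_eq_qy u ω L hN (jdx q.castSucc) (hL q.castSucc) (q : ℕ)]
    exact hq q

lemma closerCard_perturb_le (ω : Ω) (n : ℕ) (L : List (ℕ × ℕ))
    (hN : (L.map Prod.fst).Nodup) (p : ℕ × ℕ) (hp : p ∈ L) (Q : SP E.𝓧 E.𝓤) :
    E.closerCard n (fun i t => E.Z i t ω) Q p ≤
        E.closerCard n (fun i t => E.perturb L i t ω) Q p + L.length * E.T ∧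
      E.closerCard n (fun i t => E.perturb L i t ω) Q p ≤
        E.closerCard n (fun i t => E.Z i t ω) Q p + L.length * E.T := by
  have hself := E.perturb_self ω L hN p hp
  constructor
  · exact E.closerCard_transfer n (fun i t => E.perturb L i t ω) (fun i t => E.Z i t ω) Q p
      hself _ (E.perturb_diff_card ω n L)
  · exact E.closerCard_transfer n (fun i t => E.Z i t ω) (fun i t => E.perturb L i t ω) Q p
      hself.symm _ (E.perturb_diff_card' ω n L)

lemma replList_nodup {τ : ℕ} (idx : Fin (τ + 1) → ℕ × ℕ)
    (hcard : (Finset.univ.image fun q => (idx q).1).card = τ + 1) :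
    ((replList idx).map Prod.fst).Nodup := by
  have hinj : Function.Injective (fun q : Fin (τ + 1) => (idx q).1) := by
    have hIO : Set.InjOn (fun q : Fin (τ + 1) => (idx q).1) ↑(Finset.univ : Finset (Fin (τ + 1))) :=
      Finset.injOn_of_card_image_eq (by rw [hcard, Finset.card_univ, Fintype.card_fin])
    intro a b hab
    exact hIO (by simp) (by simp) hab
  rw [replList, List.map_map]
  exact (List.nodup_finRange (τ + 1)).map hinj

lemma mem_replList {τ : ℕ} (idx : Fin (τ + 1) → ℕ × ℕ) (q : Fin (τ + 1)) :
    idx q ∈ replList idx :=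
  List.mem_map.mpr ⟨q, List.mem_finRange q, rfl⟩

lemma replList_length {τ : ℕ} (idx : Fin (τ + 1) → ℕ × ℕ) :
    (replList idx).length = τ + 1 := by simp [replList]

lemma distinct₂_facts {τ : ℕ} (idx jdx : Fin (τ + 1) → ℕ × ℕ)
    (h : distinctEp₂ idx jdx = 2 * τ + 2) :
    (Finset.univ.image fun q => (idx q).1).card = τ + 1 ∧
      (Finset.univ.image fun q => (jdx q).1).card = τ + 1 ∧
      Disjoint (Finset.univ.image fun q => (idx q).1)
        (Finset.univ.image fun q => (jdx q).1) := by
  rw [distinctEp₂] at h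
  set A := Finset.univ.image fun q => (idx q).1
  set B := Finset.univ.image fun q => (jdx q).1
  have h1 : A.card ≤ τ + 1 := le_trans Finset.card_image_le (by simp)
  have h2 : B.card ≤ τ + 1 := le_trans Finset.card_image_le (by simp)
  have h3 := Finset.card_union_add_card_inter A B
  have h4 : (A ∩ B).card = 0 := by omega
  refine ⟨by omega, by omega, ?_⟩
  rw [Finset.disjoint_iff_inter_eq_empty]
  exact Finset.card_eq_zero.mp h4

lemma append_nodup_fst {τ : ℕ} (idx jdx : Fin (τ + 1) → ℕ × ℕ)
    (h : distinctEp₂ idx jdx = 2 * τ + 2) :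
    (((replList idx ++ replList jdx)).map Prod.fst).Nodup := by
  obtain ⟨h1, h2, hdisj⟩ := distinct₂_facts idx jdx h
  rw [List.map_append, List.nodup_append]
  refine ⟨replList_nodup idx h1, replList_nodup jdx h2, ?_⟩
  intro a ha b hb hab
  subst hab
  rw [replList, List.map_map, List.mem_map] at ha hb
  obtain ⟨q₁, _, hq₁⟩ := ha
  obtain ⟨q₂, _, hq₂⟩ := hb
  have haA : a ∈ Finset.univ.image fun q => (idx q).1 :=
    Finset.mem_image.mpr ⟨q₁, Finset.mem_univ _, hq₁⟩
  have haB : a ∈ Finset.univ.image fun q => (jdx q).1 :=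
    Finset.mem_image.mpr ⟨q₂, Finset.mem_univ _, hq₂⟩
  exact Finset.disjoint_left.mp hdisj haA haB

end Setting
namespace Setting

variable {d₁ d₂ : ℕ} {Ω : Type} [MeasurableSpace Ω] (E : Setting d₁ d₂ Ω)

lemma countA (u : ℕ → ↥E.𝓧 → ↥E.𝓤) (ω : Ω) (τ n K C : ℕ)
    (hnt : ∀ st, st ≤ τ → ∀ prev, (st = 0 ∨ prev ∈ E.idxSet n) →
      E.noTiesFor n (fun i t => E.Z i t ω) (qy E u ω st prev)) :
    ((Fintype.piFinset fun _ : Fin (τ + 1) => E.idxSet n).filter fun idx =>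
        E.closerCard n (fun i t => E.Z i t ω) (qy E u ω 0 (0, 0)) (idx 0) < K + C ∧
        ∀ q : Fin τ, E.closerCard n (fun i t => E.Z i t ω)
          (qy E u ω ((q : ℕ) + 1) (idx q.castSucc)) (idx q.succ) < K + C).card
      ≤ (K + C) ^ (τ + 1) := by
  have h := chain_count (E.idxSet n) (fun _ => K + C) τ
    (fun st prev p => E.closerCard n (fun i t => E.Z i t ω) (qy E u ω st prev) p < K + C)
    ?_ ?_
  · refine filter_card_le_of_imp _ (fun a _ ha => ha) _ (le_trans h (le_of_eq ?_))
    rw [Finset.prod_const, Finset.card_range]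
  · exact filter_card_le_of_imp _ (fun a _ ha => Finset.mem_range.mpr ha) _
      (le_trans (E.count_rank_mem n (fun i t => E.Z i t ω) (qy E u ω 0 (0, 0))
        (hnt 0 (Nat.zero_le τ) (0, 0) (Or.inl rfl)) (Finset.range (K + C)))
        (le_of_eq (Finset.card_range _)))
  · intro st _ h2 prev hprev
    exact filter_card_le_of_imp _ (fun a _ ha => Finset.mem_range.mpr ha) _
      (le_trans (E.count_rank_mem n (fun i t => E.Z i t ω) (qy E u ω st prev)
        (hnt st h2 prev (Or.inr hprev)) (Finset.range (K + C)))
        (le_of_eq (Finset.card_range _)))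

lemma countB (u : ℕ → ↥E.𝓧 → ↥E.𝓤) (ω : Ω) (τ n K C : ℕ)
    (hnt : ∀ st, st ≤ τ → ∀ prev, (st = 0 ∨ prev ∈ E.idxSet n) →
      E.noTiesFor n (fun i t => E.Z i t ω) (qy E u ω st prev))
    (qs : ℕ) (hqs : qs < τ + 1) :
    ((Fintype.piFinset fun _ : Fin (τ + 1) => E.idxSet n).filter fun idx =>
        (E.closerCard n (fun i t => E.Z i t ω) (qy E u ω 0 (0, 0)) (idx 0) < K + 2 * C ∧
          (0 = qs → K ≤ E.closerCard n (fun i t => E.Z i t ω) (qy E u ω 0 (0, 0)) (idx 0)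
            + 2 * C)) ∧
        ∀ q : Fin τ,
          E.closerCard n (fun i t => E.Z i t ω)
              (qy E u ω ((q : ℕ) + 1) (idx q.castSucc)) (idx q.succ) < K + 2 * C ∧
          ((q : ℕ) + 1 = qs → K ≤ E.closerCard n (fun i t => E.Z i t ω)
              (qy E u ω ((q : ℕ) + 1) (idx q.castSucc)) (idx q.succ) + 2 * C)).card
      ≤ 4 * C * (K + 2 * C) ^ τ := by
  have hcnt : ∀ st prev, E.noTiesFor n (fun i t => E.Z i t ω) (qy E u ω st prev) →
      ((E.idxSet n).filter fun p =>
        E.closerCard n (fun i t => E.Z i t ω) (qy E u ω st prev) p < K + 2 * C ∧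
        (st = qs → K ≤ E.closerCard n (fun i t => E.Z i t ω) (qy E u ω st prev) p
          + 2 * C)).card ≤ (if st = qs then 4 * C else K + 2 * C) := by
    intro st prev hties
    by_cases hst : st = qs
    · have heq : ((E.idxSet n).filter fun p =>
          E.closerCard n (fun i t => E.Z i t ω) (qy E u ω st prev) p < K + 2 * C ∧
          (st = qs → K ≤ E.closerCard n (fun i t => E.Z i t ω) (qy E u ω st prev) p
            + 2 * C)) =
          ((E.idxSet n).filter fun p =>
            E.closerCard n (fun i t => E.Z i t ω) (qy E u ω st prev) p
              ∈ Finset.Ico (K - 2 * C) (K + 2 * C)) := by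
        apply Finset.filter_congr
        intro p _
        rw [Finset.mem_Ico]
        constructor
        · rintro ⟨h1, h2⟩
          have := h2 hst
          omega
        · intro hm
          exact ⟨hm.2, fun _ => by omega⟩
      rw [heq]
      rw [if_pos hst]
      refine le_trans (E.count_rank_mem n _ _ hties _) ?_
      rw [Nat.card_Ico]
      omega
    · have heq : ((E.idxSet n).filter fun p =>
          E.closerCard n (fun i t => E.Z i t ω) (qy E u ω st prev) p < K + 2 * C ∧
          (st = qs → K ≤ E.closerCard n (fun i t => E.Z i t ω) (qy E u ω st prev) p
            + 2 * C)) =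
          ((E.idxSet n).filter fun p =>
            E.closerCard n (fun i t => E.Z i t ω) (qy E u ω st prev) p
              ∈ Finset.range (K + 2 * C)) := by
        apply Finset.filter_congr
        intro p _
        rw [Finset.mem_range]
        constructor
        · exact fun h => h.1
        · exact fun h => ⟨h, fun hc => absurd hc hst⟩
      rw [heq, if_neg hst]
      refine le_trans (E.count_rank_mem n _ _ hties _) ?_
      rw [Finset.card_range]
  have h := chain_count (E.idxSet n) (fun st => if st = qs then 4 * C else K + 2 * C) τ
    (fun st prev p =>
      E.closerCard n (fun i t => E.Z i t ω) (qy E u ω st prev) p < K + 2 * C ∧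
      (st = qs → K ≤ E.closerCard n (fun i t => E.Z i t ω) (qy E u ω st prev) p + 2 * C))
    (filter_card_le_of_imp _ (fun a _ ha => ha) _
      (hcnt 0 (0, 0) (hnt 0 (Nat.zero_le τ) (0, 0) (Or.inl rfl))))
    (fun st _ h2 prev hprev => filter_card_le_of_imp _ (fun a _ ha => ha) _
      (hcnt st prev (hnt st h2 prev (Or.inr hprev))))
  refine filter_card_le_of_imp _ (fun a _ ha => ha) _ (le_trans h (le_of_eq ?_))
  have hmem : qs ∈ Finset.range (τ + 1) := Finset.mem_range.mpr hqs
  rw [← Finset.mul_prod_erase _ _ hmem, if_pos rfl]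
  congr 1
  rw [Finset.prod_congr rfl (fun x hx => if_neg (Finset.ne_of_mem_erase hx)),
    Finset.prod_const, Finset.card_erase_of_mem hmem, Finset.card_range]
  norm_num

end Setting
namespace Setting

variable {d₁ d₂ : ℕ} {Ω : Type} [MeasurableSpace Ω] (E : Setting d₁ d₂ Ω)

lemma path_implies_chainA (u : ℕ → ↥E.𝓧 → ↥E.𝓤) (ω : Ω) (τ n K : ℕ)
    (idx : Fin (τ + 1) → ℕ × ℕ) (hpi : ∀ q, idx q ∈ E.idxSet n)
    (hcard : (Finset.univ.image fun q => (idx q).1).card = τ + 1)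
    (hpath : E.isNNPath n K u (fun i t => E.perturb (replList idx) i t ω) (E.Xq 0 ω) τ idx) :
    E.closerCard n (fun i t => E.Z i t ω) (qy E u ω 0 (0, 0)) (idx 0) < K + (τ + 1) * E.T ∧
    ∀ q : Fin τ, E.closerCard n (fun i t => E.Z i t ω)
        (qy E u ω ((q : ℕ) + 1) (idx q.castSucc)) (idx q.succ) < K + (τ + 1) * E.T := by
  have hN := replList_nodup idx hcard
  obtain ⟨h0, hsteps⟩ :=
    (E.isNNPath_iff_chain u ω τ n K (replList idx) hN idx hpi (mem_replList idx)).mp hpath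
  have hlen : (replList idx).length * E.T = (τ + 1) * E.T := by rw [replList_length]
  constructor
  · have ht := (E.closerCard_perturb_le ω n (replList idx) hN (idx 0) (mem_replList idx 0)
      (qy E u ω 0 (0, 0))).1
    omega
  · intro q
    have ht := (E.closerCard_perturb_le ω n (replList idx) hN (idx q.succ)
      (mem_replList idx q.succ) (qy E u ω ((q : ℕ) + 1) (idx q.castSucc))).1
    have hq := hsteps q
    omega

lemma diff_implies_chainB (u : ℕ → ↥E.𝓧 → ↥E.𝓤) (ω : Ω) (τ n K : ℕ)
    (jdx : Fin (τ + 1) → ℕ × ℕ) (hpiJ : ∀ q, jdx q ∈ E.idxSet n)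
    (La Lb : List (ℕ × ℕ)) (hNa : (La.map Prod.fst).Nodup) (hNb : (Lb.map Prod.fst).Nodup)
    (hmA : ∀ q, jdx q ∈ La) (hmB : ∀ q, jdx q ∈ Lb)
    (hlA : La.length * E.T ≤ 2 * ((τ + 1) * E.T))
    (hlB : Lb.length * E.T ≤ 2 * ((τ + 1) * E.T))
    (ha : E.isNNPath n K u (fun i t => E.perturb La i t ω) (E.Xq 0 ω) τ jdx)
    (hb : ¬ E.isNNPath n K u (fun i t => E.perturb Lb i t ω) (E.Xq 0 ω) τ jdx) :
    ∃ qs : Fin (τ + 1),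
      (E.closerCard n (fun i t => E.Z i t ω) (qy E u ω 0 (0, 0)) (jdx 0)
          < K + 2 * ((τ + 1) * E.T) ∧
        (0 = (qs : ℕ) → K ≤ E.closerCard n (fun i t => E.Z i t ω) (qy E u ω 0 (0, 0)) (jdx 0)
          + 2 * ((τ + 1) * E.T))) ∧
      ∀ q : Fin τ,
        E.closerCard n (fun i t => E.Z i t ω)
            (qy E u ω ((q : ℕ) + 1) (jdx q.castSucc)) (jdx q.succ) < K + 2 * ((τ + 1) * E.T) ∧
        ((q : ℕ) + 1 = (qs : ℕ) → K ≤ E.closerCard n (fun i t => E.Z i t ω)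
            (qy E u ω ((q : ℕ) + 1) (jdx q.castSucc)) (jdx q.succ) + 2 * ((τ + 1) * E.T)) := by
  rw [E.isNNPath_iff_chain u ω τ n K La hNa jdx hpiJ hmA] at ha
  rw [E.isNNPath_iff_chain u ω τ n K Lb hNb jdx hpiJ hmB] at hb
  obtain ⟨ha0, hasteps⟩ := ha
  have hA0 : E.closerCard n (fun i t => E.Z i t ω) (qy E u ω 0 (0, 0)) (jdx 0)
      < K + 2 * ((τ + 1) * E.T) := by
    have ht := (E.closerCard_perturb_le ω n La hNa (jdx 0) (hmA 0) (qy E u ω 0 (0, 0))).1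
    omega
  have hAq : ∀ q : Fin τ, E.closerCard n (fun i t => E.Z i t ω)
      (qy E u ω ((q : ℕ) + 1) (jdx q.castSucc)) (jdx q.succ) < K + 2 * ((τ + 1) * E.T) := by
    intro q
    have ht := (E.closerCard_perturb_le ω n La hNa (jdx q.succ) (hmA q.succ)
      (qy E u ω ((q : ℕ) + 1) (jdx q.castSucc))).1
    have hq := hasteps q
    omega
  rw [not_and_or] at hb
  rcases hb with hb0 | hbq
  · have hK : K ≤ E.closerCard n (fun i t => E.Z i t ω) (qy E u ω 0 (0, 0)) (jdx 0)
        + 2 * ((τ + 1) * E.T) := by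
      have hge := Nat.le_of_not_lt hb0
      have ht := (E.closerCard_perturb_le ω n Lb hNb (jdx 0) (hmB 0) (qy E u ω 0 (0, 0))).2
      omega
    refine ⟨0, ⟨hA0, fun _ => hK⟩, fun q => ⟨hAq q, fun hq => ?_⟩⟩
    rw [Fin.val_zero] at hq
    omega
  · obtain ⟨q₀, hq₀⟩ := not_forall.mp hbq
    have hK : K ≤ E.closerCard n (fun i t => E.Z i t ω)
        (qy E u ω ((q₀ : ℕ) + 1) (jdx q₀.castSucc)) (jdx q₀.succ) + 2 * ((τ + 1) * E.T) := by
      have hge := Nat.le_of_not_lt hq₀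
      have ht := (E.closerCard_perturb_le ω n Lb hNb (jdx q₀.succ) (hmB q₀.succ)
        (qy E u ω ((q₀ : ℕ) + 1) (jdx q₀.castSucc))).2
      omega
    refine ⟨q₀.succ, ⟨hA0, fun h0 => ?_⟩, fun q => ⟨hAq q, fun hq => ?_⟩⟩
    · rw [Fin.val_succ] at h0
      omega
    · rw [Fin.val_succ] at hq
      have : q = q₀ := Fin.ext (by omega)
      rw [this]
      exact hK

end Setting
namespace Setting

variable {d₁ d₂ : ℕ} {Ω : Type} [MeasurableSpace Ω] (E : Setting d₁ d₂ Ω)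

lemma pointwise_bound (u : ℕ → ↥E.𝓧 → ↥E.𝓤) (τ n : ℕ) (hτ : τ ≤ E.T) (ω : Ω)
    (hnt0 : E.noTiesFor n (fun i t => E.Z i t ω) (E.Xq 0 ω, u 0 (E.Xq 0 ω)))
    (hntQ : ∀ p ∈ E.idxSet n, ∀ st ≤ E.T,
      E.noTiesFor n (fun i t => E.Z i t ω)
        (E.nextQuery u (fun i t => E.perturb ([p]) i t ω) st p)) :
    (∑ idx ∈ Fintype.piFinset (fun _ : Fin (τ + 1) => E.idxSet n),
        ∑ jdx ∈ (Fintype.piFinset (fun _ : Fin (τ + 1) => E.idxSet n)).filter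
            (fun jdx => distinctEp₂ idx jdx = 2 * τ + 2),
          E.V n (E.K n) u (E.perturb (replList idx)) τ idx ω *
            |E.V n (E.K n) u (E.perturb (replList jdx)) τ jdx ω -
              E.V n (E.K n) u (E.perturb (replList idx ++ replList jdx)) τ jdx ω|)
      ≤ ((E.K n : ℝ)⁻¹ ^ (τ + 1) * (((E.K n + (τ + 1) * E.T) ^ (τ + 1) : ℕ) : ℝ)) *
        ((E.K n : ℝ)⁻¹ ^ (τ + 1) *
          (((τ + 1) * (4 * ((τ + 1) * E.T) * (E.K n + 2 * ((τ + 1) * E.T)) ^ τ) : ℕ) : ℝ)) := by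
  classical
  have hnt := E.noTies_qy u τ n hτ ω hnt0 hntQ
  have hvnn : (0:ℝ) ≤ ((E.K n : ℝ))⁻¹ ^ (τ + 1) := by positivity
  have hVeq : ∀ (L : List (ℕ × ℕ)) (kdx : Fin (τ + 1) → ℕ × ℕ),
      E.V n (E.K n) u (E.perturb L) τ kdx ω =
        if E.isNNPath n (E.K n) u (fun i t => E.perturb L i t ω) (E.Xq 0 ω) τ kdx
        then ((E.K n : ℝ))⁻¹ ^ (τ + 1) else 0 := fun _ _ => rfl
  let condA : (Fin (τ + 1) → ℕ × ℕ) → Prop := fun idx =>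
    E.closerCard n (fun i t => E.Z i t ω) (qy E u ω 0 (0, 0)) (idx 0)
        < E.K n + (τ + 1) * E.T ∧
      ∀ q : Fin τ, E.closerCard n (fun i t => E.Z i t ω)
        (qy E u ω ((q : ℕ) + 1) (idx q.castSucc)) (idx q.succ) < E.K n + (τ + 1) * E.T
  let COND : ℕ → (Fin (τ + 1) → ℕ × ℕ) → Prop := fun qs jdx =>
    (E.closerCard n (fun i t => E.Z i t ω) (qy E u ω 0 (0, 0)) (jdx 0)
        < E.K n + 2 * ((τ + 1) * E.T) ∧
      (0 = qs → E.K n ≤ E.closerCard n (fun i t => E.Z i t ω) (qy E u ω 0 (0, 0)) (jdx 0)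
        + 2 * ((τ + 1) * E.T))) ∧
    ∀ q : Fin τ,
      E.closerCard n (fun i t => E.Z i t ω)
          (qy E u ω ((q : ℕ) + 1) (jdx q.castSucc)) (jdx q.succ)
          < E.K n + 2 * ((τ + 1) * E.T) ∧
        ((q : ℕ) + 1 = qs → E.K n ≤ E.closerCard n (fun i t => E.Z i t ω)
          (qy E u ω ((q : ℕ) + 1) (jdx q.castSucc)) (jdx q.succ) + 2 * ((τ + 1) * E.T))
  let condB : (Fin (τ + 1) → ℕ × ℕ) → Prop := fun jdx => ∃ qs : Fin (τ + 1), COND (qs : ℕ) jdx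
  let B : ℝ := ∑ jdx ∈ Fintype.piFinset (fun _ : Fin (τ + 1) => E.idxSet n),
      (E.K n : ℝ)⁻¹ ^ (τ + 1) * (if condB jdx then 1 else 0)
  have hiteB : ∀ jdx, (0:ℝ) ≤ (if condB jdx then (1:ℝ) else 0) := fun jdx => by
    split <;> norm_num
  have hiteA : ∀ idx, (0:ℝ) ≤ (if condA idx then (1:ℝ) else 0) := fun idx => by
    split <;> norm_num
  have hBnn : 0 ≤ B := Finset.sum_nonneg fun jdx _ => mul_nonneg hvnn (hiteB jdx)
  have haidxnn : ∀ idx, (0:ℝ) ≤ (E.K n : ℝ)⁻¹ ^ (τ + 1) * (if condA idx then 1 else 0) :=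
    fun idx => mul_nonneg hvnn (hiteA idx)
  have key : ∀ idx ∈ Fintype.piFinset (fun _ : Fin (τ + 1) => E.idxSet n),
      (∑ jdx ∈ (Fintype.piFinset (fun _ : Fin (τ + 1) => E.idxSet n)).filter
          (fun jdx => distinctEp₂ idx jdx = 2 * τ + 2),
        E.V n (E.K n) u (E.perturb (replList idx)) τ idx ω *
          |E.V n (E.K n) u (E.perturb (replList jdx)) τ jdx ω -
            E.V n (E.K n) u (E.perturb (replList idx ++ replList jdx)) τ jdx ω|)
      ≤ ((E.K n : ℝ)⁻¹ ^ (τ + 1) * (if condA idx then 1 else 0)) * B := by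
    intro idx hidx
    have hpiI : ∀ q, idx q ∈ E.idxSet n := fun q => Fintype.mem_piFinset.mp hidx q
    by_cases hpath : E.isNNPath n (E.K n) u
        (fun i t => E.perturb (replList idx) i t ω) (E.Xq 0 ω) τ idx
    · by_cases hdist : (Finset.univ.image fun q => (idx q).1).card = τ + 1
      · have hVv : E.V n (E.K n) u (E.perturb (replList idx)) τ idx ω
            = ((E.K n : ℝ))⁻¹ ^ (τ + 1) := by rw [hVeq, if_pos hpath]
        have hcA : condA idx :=
          E.path_implies_chainA u ω τ n (E.K n) idx hpiI hdist hpath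
        have hstep : ∀ jdx ∈ (Fintype.piFinset (fun _ : Fin (τ + 1) => E.idxSet n)).filter
            (fun jdx => distinctEp₂ idx jdx = 2 * τ + 2),
            |E.V n (E.K n) u (E.perturb (replList jdx)) τ jdx ω -
              E.V n (E.K n) u (E.perturb (replList idx ++ replList jdx)) τ jdx ω|
              ≤ (E.K n : ℝ)⁻¹ ^ (τ + 1) * (if condB jdx then 1 else 0) := by
          intro jdx hj
          rw [Finset.mem_filter] at hj
          obtain ⟨hjpi, hd2⟩ := hj
          have hpiJ : ∀ q, jdx q ∈ E.idxSet n := fun q => Fintype.mem_piFinset.mp hjpi q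
          obtain ⟨hcI, hcJ, hdisj⟩ := distinct₂_facts idx jdx hd2
          have hNj := replList_nodup jdx hcJ
          have hNij := append_nodup_fst idx jdx hd2
          have hmemJ : ∀ q, jdx q ∈ replList jdx := mem_replList jdx
          have hmemIJ : ∀ q, jdx q ∈ replList idx ++ replList jdx :=
            fun q => List.mem_append_right _ (mem_replList jdx q)
          have hle2 : ∀ m : ℕ, m ≤ 2 * m := fun m => by omega
          have hlenJ : (replList jdx).length * E.T ≤ 2 * ((τ + 1) * E.T) := by
            rw [replList_length]; exact hle2 _
          have hlenIJ : (replList idx ++ replList jdx).length * E.T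
              ≤ 2 * ((τ + 1) * E.T) := by
            rw [List.length_append, replList_length, replList_length]
            exact le_of_eq (by ring)
          rw [hVeq, hVeq]
          by_cases h1 : E.isNNPath n (E.K n) u
              (fun i t => E.perturb (replList jdx) i t ω) (E.Xq 0 ω) τ jdx
              <;> by_cases h2 : E.isNNPath n (E.K n) u
              (fun i t => E.perturb (replList idx ++ replList jdx) i t ω) (E.Xq 0 ω) τ jdx
          · rw [if_pos h1, if_pos h2, sub_self, abs_zero]
            exact mul_nonneg hvnn (hiteB jdx)
          · have hcB : condB jdx :=
              E.diff_implies_chainB u ω τ n (E.K n) jdx hpiJ (replList jdx)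
                (replList idx ++ replList jdx) hNj hNij hmemJ hmemIJ hlenJ hlenIJ h1 h2
            rw [if_pos h1, if_neg h2, sub_zero, abs_of_nonneg hvnn, if_pos hcB, mul_one]
          · have hcB : condB jdx :=
              E.diff_implies_chainB u ω τ n (E.K n) jdx hpiJ
                (replList idx ++ replList jdx) (replList jdx) hNij hNj hmemIJ hmemJ
                hlenIJ hlenJ h2 h1
            rw [if_neg h1, if_pos h2, zero_sub, abs_neg, abs_of_nonneg hvnn,
              if_pos hcB, mul_one]
          · rw [if_neg h1, if_neg h2, sub_self, abs_zero]
            exact mul_nonneg hvnn (hiteB jdx)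
        calc (∑ jdx ∈ (Fintype.piFinset (fun _ : Fin (τ + 1) => E.idxSet n)).filter
              (fun jdx => distinctEp₂ idx jdx = 2 * τ + 2),
            E.V n (E.K n) u (E.perturb (replList idx)) τ idx ω *
              |E.V n (E.K n) u (E.perturb (replList jdx)) τ jdx ω -
                E.V n (E.K n) u (E.perturb (replList idx ++ replList jdx)) τ jdx ω|)
            ≤ ∑ jdx ∈ (Fintype.piFinset (fun _ : Fin (τ + 1) => E.idxSet n)).filter
              (fun jdx => distinctEp₂ idx jdx = 2 * τ + 2),
              (E.K n : ℝ)⁻¹ ^ (τ + 1) *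
                ((E.K n : ℝ)⁻¹ ^ (τ + 1) * (if condB jdx then 1 else 0)) := by
              refine Finset.sum_le_sum fun jdx hj => ?_
              rw [hVv]
              exact mul_le_mul_of_nonneg_left (hstep jdx hj) hvnn
          _ ≤ ∑ jdx ∈ Fintype.piFinset (fun _ : Fin (τ + 1) => E.idxSet n),
              (E.K n : ℝ)⁻¹ ^ (τ + 1) *
                ((E.K n : ℝ)⁻¹ ^ (τ + 1) * (if condB jdx then 1 else 0)) := by
              exact Finset.sum_le_sum_of_subset_of_nonneg (Finset.filter_subset _ _)
                fun jdx _ _ => mul_nonneg hvnn (mul_nonneg hvnn (hiteB jdx))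
          _ = ((E.K n : ℝ)⁻¹ ^ (τ + 1) * (if condA idx then 1 else 0)) * B := by
              rw [← Finset.mul_sum, if_pos hcA, mul_one]
      · have hemp : (Fintype.piFinset (fun _ : Fin (τ + 1) => E.idxSet n)).filter
            (fun jdx => distinctEp₂ idx jdx = 2 * τ + 2) = ∅ := by
          refine Finset.eq_empty_of_forall_notMem fun jdx hj => ?_
          rw [Finset.mem_filter] at hj
          exact hdist (distinct₂_facts idx jdx hj.2).1
        rw [hemp, Finset.sum_empty]
        exact mul_nonneg (haidxnn idx) hBnn
    · have hV0 : E.V n (E.K n) u (E.perturb (replList idx)) τ idx ω = 0 := by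
        rw [hVeq, if_neg hpath]
      calc (∑ jdx ∈ (Fintype.piFinset (fun _ : Fin (τ + 1) => E.idxSet n)).filter
            (fun jdx => distinctEp₂ idx jdx = 2 * τ + 2),
          E.V n (E.K n) u (E.perturb (replList idx)) τ idx ω *
            |E.V n (E.K n) u (E.perturb (replList jdx)) τ jdx ω -
              E.V n (E.K n) u (E.perturb (replList idx ++ replList jdx)) τ jdx ω|)
          = 0 := Finset.sum_eq_zero fun jdx _ => by rw [hV0, zero_mul]
        _ ≤ _ := mul_nonneg (haidxnn idx) hBnn
  have hA : (∑ idx ∈ Fintype.piFinset (fun _ : Fin (τ + 1) => E.idxSet n),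
      (E.K n : ℝ)⁻¹ ^ (τ + 1) * (if condA idx then 1 else 0))
      ≤ (E.K n : ℝ)⁻¹ ^ (τ + 1) * (((E.K n + (τ + 1) * E.T) ^ (τ + 1) : ℕ) : ℝ) := by
    rw [← Finset.mul_sum, Finset.sum_boole]
    refine mul_le_mul_of_nonneg_left ?_ hvnn
    exact_mod_cast E.countA u ω τ n (E.K n) ((τ + 1) * E.T) hnt
  have hB : B ≤ (E.K n : ℝ)⁻¹ ^ (τ + 1) *
      (((τ + 1) * (4 * ((τ + 1) * E.T) * (E.K n + 2 * ((τ + 1) * E.T)) ^ τ) : ℕ) : ℝ) := by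
    show (∑ jdx ∈ Fintype.piFinset (fun _ : Fin (τ + 1) => E.idxSet n),
      (E.K n : ℝ)⁻¹ ^ (τ + 1) * (if condB jdx then 1 else 0)) ≤ _
    rw [← Finset.mul_sum, Finset.sum_boole]
    refine mul_le_mul_of_nonneg_left ?_ hvnn
    have hcard : ((Fintype.piFinset (fun _ : Fin (τ + 1) => E.idxSet n)).filter condB).card
        ≤ (τ + 1) * (4 * ((τ + 1) * E.T) * (E.K n + 2 * ((τ + 1) * E.T)) ^ τ) := by
      have hsub : (Fintype.piFinset (fun _ : Fin (τ + 1) => E.idxSet n)).filter condB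
          ⊆ Finset.univ.biUnion (fun qs : Fin (τ + 1) =>
            (Fintype.piFinset (fun _ : Fin (τ + 1) => E.idxSet n)).filter
              (fun jdx => COND (qs : ℕ) jdx)) := by
        intro jdx hj
        rw [Finset.mem_filter] at hj
        obtain ⟨qs, hqs⟩ := hj.2
        exact Finset.mem_biUnion.mpr ⟨qs, Finset.mem_univ _,
          Finset.mem_filter.mpr ⟨hj.1, hqs⟩⟩
      refine le_trans (Finset.card_le_card hsub) (le_trans Finset.card_biUnion_le ?_)
      calc (∑ qs : Fin (τ + 1),
          ((Fintype.piFinset (fun _ : Fin (τ + 1) => E.idxSet n)).filter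
            (fun jdx => COND (qs : ℕ) jdx)).card)
          ≤ ∑ _qs : Fin (τ + 1),
            4 * ((τ + 1) * E.T) * (E.K n + 2 * ((τ + 1) * E.T)) ^ τ := by
            refine Finset.sum_le_sum fun qs _ => ?_
            exact E.countB u ω τ n (E.K n) ((τ + 1) * E.T) hnt (qs : ℕ) qs.isLt
        _ = (τ + 1) * (4 * ((τ + 1) * E.T) * (E.K n + 2 * ((τ + 1) * E.T)) ^ τ) := by
            rw [Finset.sum_const, Finset.card_univ, Fintype.card_fin, smul_eq_mul]
    exact_mod_cast hcard
  calc (∑ idx ∈ Fintype.piFinset (fun _ : Fin (τ + 1) => E.idxSet n),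
      ∑ jdx ∈ (Fintype.piFinset (fun _ : Fin (τ + 1) => E.idxSet n)).filter
          (fun jdx => distinctEp₂ idx jdx = 2 * τ + 2),
        E.V n (E.K n) u (E.perturb (replList idx)) τ idx ω *
          |E.V n (E.K n) u (E.perturb (replList jdx)) τ jdx ω -
            E.V n (E.K n) u (E.perturb (replList idx ++ replList jdx)) τ jdx ω|)
      ≤ ∑ idx ∈ Fintype.piFinset (fun _ : Fin (τ + 1) => E.idxSet n),
        ((E.K n : ℝ)⁻¹ ^ (τ + 1) * (if condA idx then 1 else 0)) * B :=
        Finset.sum_le_sum key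
    _ = (∑ idx ∈ Fintype.piFinset (fun _ : Fin (τ + 1) => E.idxSet n),
        (E.K n : ℝ)⁻¹ ^ (τ + 1) * (if condA idx then 1 else 0)) * B := by
        rw [Finset.sum_mul]
    _ ≤ _ := by
        refine mul_le_mul hA hB hBnn ?_
        positivity

end Setting
lemma real_bound_aux (c : ℝ) (hc : 0 ≤ c) (τ : ℕ) (x : ℝ) (hx : 1 + 2 * c ≤ x) :
    (x⁻¹ ^ (τ + 1) * (x + c) ^ (τ + 1)) *
      (x⁻¹ ^ (τ + 1) * (((τ : ℝ) + 1) * (4 * c * (x + 2 * c) ^ τ)))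
    ≤ 2 ^ (τ + 1) * (((τ : ℝ) + 1) * (4 * c * 2 ^ τ)) * x⁻¹ := by
  have hx0 : (0:ℝ) < x := by linarith
  have h1 : x⁻¹ * (x + c) ≤ 2 := by
    rw [inv_mul_le_iff₀ hx0]
    linarith
  have h2 : x⁻¹ * (x + 2 * c) ≤ 2 := by
    rw [inv_mul_le_iff₀ hx0]
    linarith
  have hb1 : x⁻¹ ^ (τ + 1) * (x + c) ^ (τ + 1) ≤ 2 ^ (τ + 1) := by
    rw [← mul_pow]
    exact pow_le_pow_left₀ (by positivity) h1 _
  have hb2 : x⁻¹ ^ (τ + 1) * (((τ : ℝ) + 1) * (4 * c * (x + 2 * c) ^ τ))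
      ≤ ((τ : ℝ) + 1) * (4 * c * 2 ^ τ) * x⁻¹ := by
    have e2 : x⁻¹ ^ (τ + 1) * (((τ : ℝ) + 1) * (4 * c * (x + 2 * c) ^ τ))
        = (x⁻¹ * (x + 2 * c)) ^ τ * ((((τ : ℝ) + 1) * (4 * c)) * x⁻¹) := by
      rw [mul_pow, pow_succ]
      ring
    rw [e2]
    have hp : (x⁻¹ * (x + 2 * c)) ^ τ ≤ 2 ^ τ := pow_le_pow_left₀ (by positivity) h2 _
    calc (x⁻¹ * (x + 2 * c)) ^ τ * ((((τ : ℝ) + 1) * (4 * c)) * x⁻¹)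
        ≤ 2 ^ τ * ((((τ : ℝ) + 1) * (4 * c)) * x⁻¹) := by
          refine mul_le_mul_of_nonneg_right hp ?_
          positivity
      _ = ((τ : ℝ) + 1) * (4 * c * 2 ^ τ) * x⁻¹ := by ring
  have hnn2 : 0 ≤ x⁻¹ ^ (τ + 1) * (((τ : ℝ) + 1) * (4 * c * (x + 2 * c) ^ τ)) := by
    refine mul_nonneg (by positivity) (mul_nonneg (by positivity) ?_)
    refine mul_nonneg (by positivity) (pow_nonneg (by linarith) τ)
  calc (x⁻¹ ^ (τ + 1) * (x + c) ^ (τ + 1)) *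
        (x⁻¹ ^ (τ + 1) * (((τ : ℝ) + 1) * (4 * c * (x + 2 * c) ^ τ)))
      ≤ 2 ^ (τ + 1) * (((τ : ℝ) + 1) * (4 * c * 2 ^ τ) * x⁻¹) :=
        mul_le_mul hb1 hb2 hnn2 (by positivity)
    _ = 2 ^ (τ + 1) * (((τ : ℝ) + 1) * (4 * c * 2 ^ τ)) * x⁻¹ := by ring

lemma bound_tendsto_aux (K : ℕ → ℕ) (hK : Tendsto K atTop atTop) (c τ : ℕ) :
    Tendsto (fun n =>
      ((K n : ℝ)⁻¹ ^ (τ + 1) * (((K n + c) ^ (τ + 1) : ℕ) : ℝ)) *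
        ((K n : ℝ)⁻¹ ^ (τ + 1) *
          (((τ + 1) * (4 * c * (K n + 2 * c) ^ τ) : ℕ) : ℝ))) atTop (nhds 0) := by
  have hKr : Tendsto (fun n => (K n : ℝ)) atTop atTop :=
    tendsto_natCast_atTop_atTop.comp hK
  have hg : Tendsto (fun n => (2:ℝ) ^ (τ + 1) * (((τ : ℝ) + 1) * (4 * (c:ℝ) * 2 ^ τ))
      * (K n : ℝ)⁻¹) atTop (nhds 0) := by
    have := (tendsto_inv_atTop_zero.comp hKr).const_mul
      ((2:ℝ) ^ (τ + 1) * (((τ : ℝ) + 1) * (4 * (c:ℝ) * 2 ^ τ)))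
    simpa using this
  refine squeeze_zero' (Filter.Eventually.of_forall fun n => by positivity) ?_ hg
  filter_upwards [hKr.eventually_ge_atTop (1 + 2 * (c:ℝ))] with n hn
  push_cast
  refine le_trans (le_of_eq (by ring))
    (real_bound_aux (c:ℝ) (by positivity) τ (K n : ℝ) hn)

/-- **Proposition 2.3.** Assume the probability of a tie occurring in any nearest neighbor
search is zero, and let `K_n → ∞`, `K_n/n → 0`. Then for every `τ ≤ T`,
`E[Σ_{i^τ,t^τ} Σ_{j^τ,s^τ : |[i^τ,j^τ]| = 2τ+2} V_{n,i^τ,t^τ}(D_{i^τ,t^τ})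
  · |V_{n,j^τ,s^τ}(D_{j^τ,s^τ}) − V_{n,j^τ,s^τ}(D_{(i^τ,j^τ),(t^τ,s^τ)})|] → 0`,
where `D_{(i^τ,j^τ),(t^τ,s^τ)}` applies both sets of continuation replacements. -/
theorem sum_V_double_perturbation_tendsto_zero {d₁ d₂ : ℕ} {Ω : Type} [MeasurableSpace Ω]
    (E : Setting d₁ d₂ Ω) (u : ℕ → ↥E.𝓧 → ↥E.𝓤)
    (hties : E.NoTies u) (τ : ℕ) (hτ : τ ≤ E.T)
    (hK : Tendsto E.K atTop atTop)
    (hKn : Tendsto (fun n => (E.K n : ℝ) / (n : ℝ)) atTop (nhds 0)) :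
    Tendsto (fun n => ∫ ω,
        ∑ idx ∈ Fintype.piFinset (fun _ : Fin (τ + 1) => E.idxSet n),
          ∑ jdx ∈ (Fintype.piFinset (fun _ : Fin (τ + 1) => E.idxSet n)).filter
              (fun jdx => Setting.distinctEp₂ idx jdx = 2 * τ + 2),
            E.V n (E.K n) u (E.perturb (Setting.replList idx)) τ idx ω *
              |E.V n (E.K n) u (E.perturb (Setting.replList jdx)) τ jdx ω -
                E.V n (E.K n) u
                  (E.perturb (Setting.replList idx ++ Setting.replList jdx)) τ jdx ω| ∂E.P)
      atTop (nhds 0) := by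
  classical
  haveI := E.probP
  have hΩ : Nonempty Ω := by
    by_contra h
    rw [not_nonempty_iff] at h
    have h1 : E.P Set.univ = 1 := measure_univ
    rw [Set.univ_eq_empty_iff.mpr h, measure_empty] at h1
    exact zero_ne_one h1
  have hVnn : ∀ (n K : ℕ) (data : ℕ → ℕ → Ω → SP E.𝓧 E.𝓤) (kdx : Fin (τ + 1) → ℕ × ℕ)
      (ω : Ω), 0 ≤ E.V n K u data τ kdx ω := by
    intro n K data kdx ω
    have h : E.V n K u data τ kdx ω =
        if E.isNNPath n K u (fun i t => data i t ω) (E.Xq 0 ω) τ kdx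
        then ((K : ℝ))⁻¹ ^ (τ + 1) else 0 := rfl
    rw [h]
    split
    · positivity
    · exact le_refl 0
  have hfnn : ∀ (n : ℕ) (ω : Ω), 0 ≤
      ∑ idx ∈ Fintype.piFinset (fun _ : Fin (τ + 1) => E.idxSet n),
        ∑ jdx ∈ (Fintype.piFinset (fun _ : Fin (τ + 1) => E.idxSet n)).filter
            (fun jdx => Setting.distinctEp₂ idx jdx = 2 * τ + 2),
          E.V n (E.K n) u (E.perturb (Setting.replList idx)) τ idx ω *
            |E.V n (E.K n) u (E.perturb (Setting.replList jdx)) τ jdx ω -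
              E.V n (E.K n) u
                (E.perturb (Setting.replList idx ++ Setting.replList jdx)) τ jdx ω| := by
    intro n ω
    exact Finset.sum_nonneg fun idx _ => Finset.sum_nonneg fun jdx _ =>
      mul_nonneg (hVnn n (E.K n) _ idx ω) (abs_nonneg _)
  have hae : ∀ n : ℕ, ∀ᵐ ω ∂E.P,
      (∑ idx ∈ Fintype.piFinset (fun _ : Fin (τ + 1) => E.idxSet n),
        ∑ jdx ∈ (Fintype.piFinset (fun _ : Fin (τ + 1) => E.idxSet n)).filter
            (fun jdx => Setting.distinctEp₂ idx jdx = 2 * τ + 2),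
          E.V n (E.K n) u (E.perturb (Setting.replList idx)) τ idx ω *
            |E.V n (E.K n) u (E.perturb (Setting.replList jdx)) τ jdx ω -
              E.V n (E.K n) u
                (E.perturb (Setting.replList idx ++ Setting.replList jdx)) τ jdx ω|)
        ≤ ((E.K n : ℝ)⁻¹ ^ (τ + 1) * (((E.K n + (τ + 1) * E.T) ^ (τ + 1) : ℕ) : ℝ)) *
          ((E.K n : ℝ)⁻¹ ^ (τ + 1) *
            (((τ + 1) * (4 * ((τ + 1) * E.T) * (E.K n + 2 * ((τ + 1) * E.T)) ^ τ) : ℕ) : ℝ)) := by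
    intro n
    obtain ⟨ω₀⟩ := hΩ
    filter_upwards [hties n (E.Xq 0 ω₀)] with ω hω
    exact E.pointwise_bound u τ n hτ ω ((hω ([]) ([])).2.1 0)
      (fun p hp st hst => (hω ([]) ([p])).2.2 p hp st hst)
  refine tendsto_of_tendsto_of_tendsto_of_le_of_le (g := fun _ => (0:ℝ))
    (h := fun n => ((E.K n : ℝ)⁻¹ ^ (τ + 1) * (((E.K n + (τ + 1) * E.T) ^ (τ + 1) : ℕ) : ℝ)) *
      ((E.K n : ℝ)⁻¹ ^ (τ + 1) *
        (((τ + 1) * (4 * ((τ + 1) * E.T) * (E.K n + 2 * ((τ + 1) * E.T)) ^ τ) : ℕ) : ℝ)))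
    tendsto_const_nhds (bound_tendsto_aux E.K hK ((τ + 1) * E.T) τ) ?_ ?_
  · intro n
    exact integral_nonneg (fun ω => hfnn n ω)
  · intro n
    by_cases hInt : Integrable (fun ω =>
      ∑ idx ∈ Fintype.piFinset (fun _ : Fin (τ + 1) => E.idxSet n),
        ∑ jdx ∈ (Fintype.piFinset (fun _ : Fin (τ + 1) => E.idxSet n)).filter
            (fun jdx => Setting.distinctEp₂ idx jdx = 2 * τ + 2),
          E.V n (E.K n) u (E.perturb (Setting.replList idx)) τ idx ω *
            |E.V n (E.K n) u (E.perturb (Setting.replList jdx)) τ jdx ω -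
              E.V n (E.K n) u
                (E.perturb (Setting.replList idx ++ Setting.replList jdx)) τ jdx ω|) E.P
    · refine le_trans (integral_mono_ae hInt (integrable_const _) (hae n)) ?_
      rw [integral_const]
      simp
    · exact le_trans (le_of_eq (integral_undef hInt)) (by positivity)

end KNNRPaper
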